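/- The conformal transformation is reversible: if (X,d) is a length space, w: X → ℝ is bounded continuous, and d' is the conformal metric with factor e^w (infimum of e^w-weighted lengths of d-absolutely continuous curves), then applying the conformal construction to (X,d') with factor e^{-w} recovers d restricted to its length structure; i.e., the e^{-w}-weighted length of any absolutely continuous curve γ in (X,d') equals its d-length, so the conformal metric of (X,d') with weight -w equals the length metric of d. -/

import Mathlib

open Filter MeasureTheory
open scoped Topology

/-- An absolutely continuous curve `γ : [0,1] → X` (w.r.t. a distance function `d`)
bundled with its metric speed `|γ̇_t| = lim_{h→0} d(γ(t+h), γ t)/|h|`. -/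
structure ACWithSpeed (X : Type*) (d : X → X → ℝ) where
  toFun : ℝ → X
  speed : ℝ → ℝ
  speed_nonneg : ∀ t, 0 ≤ speed t
  integrable : IntervalIntegrable speed volume 0 1
  speed_ae : ∀ᵐ t ∂(volume.restrict (Set.Ioo (0:ℝ) 1)),
    Filter.Tendsto (fun h : ℝ => d (toFun (t + h)) (toFun t) / |h|) (𝓝[≠] (0:ℝ))
      (𝓝 (speed t))
  dist_le : ∀ a b : ℝ, 0 ≤ a → a ≤ b → b ≤ 1 →
    d (toFun a) (toFun b) ≤ ∫ t in a..b, speed t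

/-- The `e^w`-weighted length of an absolutely continuous curve. -/
noncomputable def wLength {X : Type*} (d : X → X → ℝ) (w : X → ℝ) (c : ACWithSpeed X d) : ℝ :=
  ∫ t in (0:ℝ)..1, c.speed t * Real.exp (w (c.toFun t))

/-- The conformal distance with conformal factor `e^w`: infimum of `e^w`-weighted lengths
of absolutely continuous curves joining the two points. -/
noncomputable def confDist {X : Type*} (d : X → X → ℝ) (w : X → ℝ) (x y : X) : ℝ :=
  sInf { L | ∃ c : ACWithSpeed X d, c.toFun 0 = x ∧ c.toFun 1 = y ∧ L = wLength d w c }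

/-- The intrinsic (length) distance induced by `d`. -/
noncomputable def lengthDist {X : Type*} (d : X → X → ℝ) (x y : X) : ℝ :=
  confDist d (fun _ => 0) x y

namespace ConfAux

variable {X : Type*} [MetricSpace X]

lemma wLength_nonneg {d : X → X → ℝ} (ω : X → ℝ) (c : ACWithSpeed X d) :
    0 ≤ wLength d ω c := by
  apply intervalIntegral.integral_nonneg zero_le_one
  intro t _
  exact mul_nonneg (c.speed_nonneg t) (Real.exp_nonneg _)

lemma bddBelow_set (d : X → X → ℝ) (ω : X → ℝ) (x y : X) :
    BddBelow { L | ∃ c : ACWithSpeed X d, c.toFun 0 = x ∧ c.toFun 1 = y ∧ L = wLength d ω c } := by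
  refine ⟨0, ?_⟩
  rintro L ⟨c, -, -, rfl⟩
  exact wLength_nonneg ω c

lemma confDist_nonneg (d : X → X → ℝ) (ω : X → ℝ) (x y : X) : 0 ≤ confDist d ω x y := by
  apply Real.sInf_nonneg
  rintro L ⟨c, -, -, rfl⟩
  exact wLength_nonneg ω c

lemma confDist_le_wLength {d : X → X → ℝ} (ω : X → ℝ) (c : ACWithSpeed X d) {x y : X}
    (h0 : c.toFun 0 = x) (h1 : c.toFun 1 = y) :
    confDist d ω x y ≤ wLength d ω c :=
  csInf_le (bddBelow_set d ω x y) ⟨c, h0, h1, rfl⟩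

def constCurve (d : X → X → ℝ) (x : X) (h : d x x = 0) : ACWithSpeed X d where
  toFun := fun _ => x
  speed := fun _ => 0
  speed_nonneg := fun _ => le_refl 0
  integrable := intervalIntegrable_const
  speed_ae := by
    filter_upwards with t
    simpa [h] using (tendsto_const_nhds : Filter.Tendsto (fun _ : ℝ => (0:ℝ)) (𝓝[≠] (0:ℝ)) (𝓝 0))
  dist_le := by intro a b _ _ _; simp [h]

lemma confDist_self {d : X → X → ℝ} (ω : X → ℝ) (x : X) (h : d x x = 0) :
    confDist d ω x x = 0 := by
  refine le_antisymm ?_ (confDist_nonneg d ω x x)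
  have h1 : wLength d ω (constCurve d x h) = 0 := by
    simp [wLength, constCurve]
  calc confDist d ω x x ≤ wLength d ω (constCurve d x h) :=
        confDist_le_wLength ω _ rfl rfl
    _ = 0 := h1

lemma wLength_zero {d : X → X → ℝ} (c : ACWithSpeed X d) :
    wLength d (fun _ => 0) c = ∫ t in (0:ℝ)..1, c.speed t := by
  simp [wLength]



lemma speed_sub_integrable {d : X → X → ℝ} (c : ACWithSpeed X d) {u v : ℝ}
    (huv : Set.uIcc u v ⊆ Set.Icc (0:ℝ) 1) :
    IntervalIntegrable c.speed volume u v := by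
  apply c.integrable.mono_set
  rwa [Set.uIcc_of_le (zero_le_one' ℝ)]

lemma integral_speed_nonneg {d : X → X → ℝ} (c : ACWithSpeed X d) {u v : ℝ} (huv : u ≤ v) :
    0 ≤ ∫ t in u..v, c.speed t :=
  intervalIntegral.integral_nonneg huv (fun t _ => c.speed_nonneg t)

/-- key monotonicity: `∫_0^s speed ≤ ∫_0^1 speed` for `s ∈ [0,1]`. -/
lemma integral_speed_mono {d : X → X → ℝ} (c : ACWithSpeed X d) {s : ℝ}
    (h0 : 0 ≤ s) (h1 : s ≤ 1) :
    (∫ t in (0:ℝ)..s, c.speed t) ≤ ∫ t in (0:ℝ)..1, c.speed t := by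
  have hsub : IntervalIntegrable c.speed volume 0 s :=
    speed_sub_integrable c (by rw [Set.uIcc_of_le h0]; exact Set.Icc_subset_Icc le_rfl h1)
  have hsub2 : IntervalIntegrable c.speed volume s 1 :=
    speed_sub_integrable c (by rw [Set.uIcc_of_le h1]; exact Set.Icc_subset_Icc h0 le_rfl)
  have := intervalIntegral.integral_add_adjacent_intervals hsub hsub2
  have h2 : 0 ≤ ∫ t in s..1, c.speed t :=
    intervalIntegral.integral_nonneg h1 (fun t _ => c.speed_nonneg t)
  linarith

lemma dist_toFun_le {d : X → X → ℝ} {C : ℝ} (hC : 0 ≤ C)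
    (hd : ∀ p q : X, dist p q ≤ C * d p q) (c : ACWithSpeed X d) {u v : ℝ}
    (hu : u ∈ Set.Icc (0:ℝ) 1) (hv : v ∈ Set.Icc (0:ℝ) 1) (huv : u ≤ v) :
    dist (c.toFun u) (c.toFun v) ≤ C * ∫ t in u..v, c.speed t := by
  refine (hd _ _).trans ?_
  apply mul_le_mul_of_nonneg_left _ hC
  exact c.dist_le u v hu.1 huv hv.2

lemma continuousOn_toFun {d : X → X → ℝ} {C : ℝ} (hC : 0 ≤ C)
    (hd : ∀ p q : X, dist p q ≤ C * d p q) (c : ACWithSpeed X d) :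
    ContinuousOn c.toFun (Set.Icc (0:ℝ) 1) := by
  have hint : IntegrableOn c.speed (Set.uIcc (0:ℝ) 1) volume := by
    rw [← intervalIntegrable_iff']; exact c.integrable
  have hP : ContinuousOn (fun x => ∫ t in (0:ℝ)..x, c.speed t) (Set.Icc (0:ℝ) 1) := by
    have := intervalIntegral.continuousOn_primitive_interval hint
    rwa [Set.uIcc_of_le (zero_le_one' ℝ)] at this
  rw [Metric.continuousOn_iff]
  intro b hb ε hε
  rw [Metric.continuousOn_iff] at hP
  obtain ⟨δ, hδ, hP'⟩ := hP b hb (ε / (C + 1)) (by positivity)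
  refine ⟨δ, hδ, fun a ha hab => ?_⟩
  have key : ∀ x y : ℝ, x ∈ Set.Icc (0:ℝ) 1 → y ∈ Set.Icc (0:ℝ) 1 → x ≤ y →
      dist (c.toFun x) (c.toFun y) ≤
        C * |(∫ t in (0:ℝ)..y, c.speed t) - ∫ t in (0:ℝ)..x, c.speed t| := by
    intro x y hx hy hxy
    have hxint : IntervalIntegrable c.speed volume 0 x :=
      speed_sub_integrable c (by rw [Set.uIcc_of_le hx.1]; exact Set.Icc_subset_Icc le_rfl hx.2)
    have hyint : IntervalIntegrable c.speed volume 0 y :=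
      speed_sub_integrable c (by rw [Set.uIcc_of_le hy.1]; exact Set.Icc_subset_Icc le_rfl hy.2)
    have hsub := intervalIntegral.integral_interval_sub_left hyint hxint
    rw [hsub]
    refine (dist_toFun_le hC hd c hx hy hxy).trans ?_
    apply mul_le_mul_of_nonneg_left (le_abs_self _) hC
  have hPd := hP' a ha hab
  rw [Real.dist_eq] at hPd
  have habs : C * |(∫ t in (0:ℝ)..a, c.speed t) - ∫ t in (0:ℝ)..b, c.speed t| < ε := by
    calc C * |(∫ t in (0:ℝ)..a, c.speed t) - ∫ t in (0:ℝ)..b, c.speed t|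
        ≤ C * (ε / (C + 1)) := mul_le_mul_of_nonneg_left hPd.le hC
      _ < ε := by
          rw [mul_div_assoc']
          rw [div_lt_iff₀ (by positivity)]
          nlinarith
  rcases le_total a b with h | h
  · have hk := key a b ha hb h
    rw [abs_sub_comm] at hk
    exact lt_of_le_of_lt hk habs
  · have hk := key b a hb ha h
    rw [dist_comm] at hk
    exact lt_of_le_of_lt hk habs

lemma integrable_mul_exp {d : X → X → ℝ} {C : ℝ} (hC : 0 ≤ C)
    (hd : ∀ p q : X, dist p q ≤ C * d p q) (c : ACWithSpeed X d)
    (φ : X → ℝ) (hφ : Continuous φ) {u v : ℝ} (huv : Set.uIcc u v ⊆ Set.Icc (0:ℝ) 1) :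
    IntervalIntegrable (fun t => c.speed t * Real.exp (φ (c.toFun t))) volume u v := by
  apply (speed_sub_integrable c huv).mul_continuousOn
  exact (Real.continuous_exp.comp hφ).comp_continuousOn
    ((continuousOn_toFun hC hd c).mono huv)


end ConfAux
namespace ConfAux
variable {X : Type*} [MetricSpace X]

lemma hd_dist : ∀ p q : X, dist p q ≤ 1 * (fun p q : X => dist p q) p q := by
  intro p q; simp

lemma uIcc01 : Set.uIcc (0:ℝ) 1 ⊆ Set.Icc (0:ℝ) 1 := by
  rw [Set.uIcc_of_le (zero_le_one' ℝ)]

lemma no_curve_dist_eq_zero (hlen : ∀ a b : X, dist a b = lengthDist (fun p q => dist p q) a b)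
    {x y : X}
    (h : ¬ ∃ c : ACWithSpeed X (fun p q => dist p q), c.toFun 0 = x ∧ c.toFun 1 = y) :
    dist x y = 0 := by
  have hempty : {L | ∃ c : ACWithSpeed X (fun p q => dist p q),
      c.toFun 0 = x ∧ c.toFun 1 = y ∧ L = wLength (fun p q => dist p q) (fun _ => 0) c} = ∅ := by
    ext L
    simp only [Set.mem_setOf_eq, Set.mem_empty_iff_false, iff_false]
    rintro ⟨c, h0, h1, -⟩
    exact h ⟨c, h0, h1⟩
  rw [hlen, lengthDist, confDist, hempty, Real.sInf_empty]

variable {w : X → ℝ} {m M : ℝ}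

lemma exp_le_wLength (hw : Continuous w) (hm : ∀ x, m ≤ w x)
    (c : ACWithSpeed X (fun p q => dist p q)) :
    Real.exp m * (∫ t in (0:ℝ)..1, c.speed t) ≤ wLength (fun p q => dist p q) w c := by
  rw [← intervalIntegral.integral_const_mul]
  apply intervalIntegral.integral_mono_on zero_le_one (c.integrable.const_mul _)
    (integrable_mul_exp zero_le_one hd_dist c w hw uIcc01)
  intro t _
  rw [mul_comm]
  exact mul_le_mul_of_nonneg_left (Real.exp_le_exp.mpr (hm _)) (c.speed_nonneg t)

lemma exp_m_dist_le_confDist (hw : Continuous w) (hm : ∀ x, m ≤ w x)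
    (hlen : ∀ a b : X, dist a b = lengthDist (fun p q => dist p q) a b) (x y : X) :
    Real.exp m * dist x y ≤ confDist (fun p q => dist p q) w x y := by
  by_cases hex : ∃ c : ACWithSpeed X (fun p q => dist p q), c.toFun 0 = x ∧ c.toFun 1 = y
  · obtain ⟨c₀, hc₀⟩ := hex
    refine le_csInf ⟨wLength (fun p q => dist p q) w c₀, c₀, hc₀.1, hc₀.2, rfl⟩ ?_
    rintro L ⟨c, h0, h1, rfl⟩
    have h2 : dist x y ≤ ∫ t in (0:ℝ)..1, c.speed t := by
      rw [← h0, ← h1]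
      exact c.dist_le 0 1 le_rfl zero_le_one le_rfl
    calc Real.exp m * dist x y ≤ Real.exp m * ∫ t in (0:ℝ)..1, c.speed t :=
          mul_le_mul_of_nonneg_left h2 (Real.exp_nonneg m)
      _ ≤ _ := exp_le_wLength hw hm c
  · rw [no_curve_dist_eq_zero hlen hex, mul_zero]
    exact confDist_nonneg _ _ _ _

lemma dist_le_exp_confDist (hw : Continuous w) (hm : ∀ x, m ≤ w x)
    (hlen : ∀ a b : X, dist a b = lengthDist (fun p q => dist p q) a b) (p q : X) :
    dist p q ≤ Real.exp (-m) * confDist (fun p q => dist p q) w p q := by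
  have h := exp_m_dist_le_confDist hw hm hlen p q
  calc dist p q = Real.exp (-m) * (Real.exp m * dist p q) := by
        rw [← mul_assoc, ← Real.exp_add]; simp
    _ ≤ _ := mul_le_mul_of_nonneg_left h (Real.exp_nonneg _)

lemma loc_upper (hw : Continuous w)
    (hlen : ∀ a b : X, dist a b = lengthDist (fun p q => dist p q) a b)
    {z : X} {ε r : ℝ} (hr : 0 < r)
    (hball : ∀ x : X, dist x z < r → w x ≤ w z + ε)
    {p q : X} (hp : dist p z < r/4) (hq : dist q z < r/4) :
    confDist (fun p q => dist p q) w p q ≤ Real.exp (w z + ε) * dist p q := by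
  rcases eq_or_ne p q with rfl | hpq
  · rw [dist_self, mul_zero]
    exact le_of_eq (confDist_self w p (dist_self p))
  have hd0 : 0 < dist p q := dist_pos.mpr hpq
  have hex : ∃ c : ACWithSpeed X (fun p q => dist p q), c.toFun 0 = p ∧ c.toFun 1 = q := by
    by_contra hno
    exact hpq (dist_eq_zero.mp (no_curve_dist_eq_zero hlen hno))
  apply le_of_forall_pos_le_add
  intro η hη
  have hexp : (0:ℝ) < Real.exp (w z + ε) := Real.exp_pos _
  set δ := min (r/4) (η / Real.exp (w z + ε)) with hδdef
  have hδ : 0 < δ := lt_min (by positivity) (by positivity)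
  have hδ1 : δ ≤ r/4 := min_le_left _ _
  have hδ2 : δ ≤ η / Real.exp (w z + ε) := min_le_right _ _
  have hS0 : dist p q = sInf {L | ∃ c : ACWithSpeed X (fun p q => dist p q),
      c.toFun 0 = p ∧ c.toFun 1 = q ∧ L = wLength (fun p q => dist p q) (fun _ => 0) c} := by
    rw [hlen p q]; rfl
  obtain ⟨c₀, hc₀⟩ := hex
  have hne0 : Set.Nonempty {L | ∃ c : ACWithSpeed X (fun p q => dist p q),
      c.toFun 0 = p ∧ c.toFun 1 = q ∧ L = wLength (fun p q => dist p q) (fun _ => 0) c} :=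
    ⟨_, c₀, hc₀.1, hc₀.2, rfl⟩
  have hlt : sInf {L | ∃ c : ACWithSpeed X (fun p q => dist p q),
      c.toFun 0 = p ∧ c.toFun 1 = q ∧ L = wLength (fun p q => dist p q) (fun _ => 0) c}
      < dist p q + δ := by rw [← hS0]; linarith
  obtain ⟨L, ⟨c, h0, h1, hL⟩, hLlt⟩ := exists_lt_of_csInf_lt hne0 hlt
  have hLval : L = ∫ t in (0:ℝ)..1, c.speed t := by rw [hL, wLength_zero]
  have hLnn : 0 ≤ L := by rw [hLval]; exact integral_speed_nonneg c zero_le_one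
  have hstay : ∀ s ∈ Set.Icc (0:ℝ) 1, dist (c.toFun s) z < r := by
    intro s hs
    have h2 : dist (c.toFun 0) (c.toFun s) ≤ ∫ t in (0:ℝ)..s, c.speed t :=
      c.dist_le 0 s le_rfl hs.1 hs.2
    have h3 := integral_speed_mono c hs.1 hs.2
    have h4 : dist p q < r/2 := by
      have := dist_triangle p z q
      have hqz : dist z q = dist q z := dist_comm z q
      linarith
    have h5 : dist (c.toFun s) z ≤ dist (c.toFun s) (c.toFun 0) + dist (c.toFun 0) z :=
      dist_triangle _ _ _
    have h6 : dist (c.toFun s) (c.toFun 0) = dist (c.toFun 0) (c.toFun s) := dist_comm _ _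
    have h7 : dist (c.toFun 0) z = dist p z := by rw [h0]
    have h8 : (∫ t in (0:ℝ)..1, c.speed t) < dist p q + δ := by rw [← hLval]; exact hLlt
    linarith
  have hwle : wLength (fun p q => dist p q) w c ≤ Real.exp (w z + ε) * L := by
    rw [hLval, ← intervalIntegral.integral_const_mul]
    apply intervalIntegral.integral_mono_on zero_le_one
      (integrable_mul_exp zero_le_one hd_dist c w hw uIcc01) (c.integrable.const_mul _)
    intro t ht
    calc c.speed t * Real.exp (w (c.toFun t)) ≤ c.speed t * Real.exp (w z + ε) :=
          mul_le_mul_of_nonneg_left (Real.exp_le_exp.mpr (hball _ (hstay t ht)))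
            (c.speed_nonneg t)
      _ = Real.exp (w z + ε) * c.speed t := mul_comm _ _
  have hfinal : Real.exp (w z + ε) * δ ≤ η := by
    calc Real.exp (w z + ε) * δ ≤ Real.exp (w z + ε) * (η / Real.exp (w z + ε)) :=
          mul_le_mul_of_nonneg_left hδ2 (Real.exp_nonneg _)
      _ = η := by rw [mul_comm, div_mul_cancel₀ _ (ne_of_gt hexp)]
  calc confDist (fun p q => dist p q) w p q ≤ wLength (fun p q => dist p q) w c :=
        confDist_le_wLength w c h0 h1
    _ ≤ Real.exp (w z + ε) * L := hwle
    _ ≤ Real.exp (w z + ε) * (dist p q + δ) :=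
        mul_le_mul_of_nonneg_left hLlt.le (Real.exp_nonneg _)
    _ = Real.exp (w z + ε) * dist p q + Real.exp (w z + ε) * δ := by ring
    _ ≤ Real.exp (w z + ε) * dist p q + η := by linarith

lemma loc_lower (hw : Continuous w) (hm : ∀ x, m ≤ w x)
    (hlen : ∀ a b : X, dist a b = lengthDist (fun p q => dist p q) a b)
    {z : X} {ε r : ℝ} (hr : 0 < r)
    (hball : ∀ x : X, dist x z < r → w z - ε ≤ w x)
    {p q : X} (hp : dist p z < r/4) (hq : dist q z < r/4) :
    min (Real.exp (w z - ε) * dist p q) (Real.exp m * r)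
      ≤ confDist (fun p q => dist p q) w p q := by
  by_cases hex : ∃ c : ACWithSpeed X (fun p q => dist p q), c.toFun 0 = p ∧ c.toFun 1 = q
  · obtain ⟨c₀, hc₀⟩ := hex
    refine le_csInf ⟨wLength (fun p q => dist p q) w c₀, c₀, hc₀.1, hc₀.2, rfl⟩ ?_
    rintro L ⟨c, h0, h1, rfl⟩
    by_cases hin : ∀ s ∈ Set.Icc (0:ℝ) 1, dist (c.toFun s) z < r
    · refine le_trans (min_le_left _ _) ?_
      have h2 : dist p q ≤ ∫ t in (0:ℝ)..1, c.speed t := by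
        rw [← h0, ← h1]
        exact c.dist_le 0 1 le_rfl zero_le_one le_rfl
      calc Real.exp (w z - ε) * dist p q
          ≤ Real.exp (w z - ε) * ∫ t in (0:ℝ)..1, c.speed t :=
            mul_le_mul_of_nonneg_left h2 (Real.exp_nonneg _)
        _ = ∫ t in (0:ℝ)..1, Real.exp (w z - ε) * c.speed t :=
            (intervalIntegral.integral_const_mul _ _).symm
        _ ≤ ∫ t in (0:ℝ)..1, c.speed t * Real.exp (w (c.toFun t)) := by
            apply intervalIntegral.integral_mono_on zero_le_one
              (c.integrable.const_mul _)
              (integrable_mul_exp zero_le_one hd_dist c w hw uIcc01)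
            intro t ht
            rw [mul_comm]
            exact mul_le_mul_of_nonneg_left (Real.exp_le_exp.mpr (hball _ (hin t ht)))
              (c.speed_nonneg t)
        _ = wLength (fun p q => dist p q) w c := rfl
    · push_neg at hin
      obtain ⟨s, hs, hrs⟩ := hin
      refine le_trans (min_le_right _ _) ?_
      have h1int : IntervalIntegrable c.speed volume 0 s :=
        speed_sub_integrable c (by rw [Set.uIcc_of_le hs.1]; exact Set.Icc_subset_Icc le_rfl hs.2)
      have h2int : IntervalIntegrable c.speed volume s 1 :=
        speed_sub_integrable c (by rw [Set.uIcc_of_le hs.2]; exact Set.Icc_subset_Icc hs.1 le_rfl)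
      have hsplit := intervalIntegral.integral_add_adjacent_intervals h1int h2int
      have hA : dist (c.toFun 0) (c.toFun s) ≤ ∫ t in (0:ℝ)..s, c.speed t :=
        c.dist_le 0 s le_rfl hs.1 hs.2
      have hB : dist (c.toFun s) (c.toFun 1) ≤ ∫ t in s..1, c.speed t :=
        c.dist_le s 1 hs.1 hs.2 le_rfl
      have htri1 : dist (c.toFun s) z ≤ dist (c.toFun s) (c.toFun 0) + dist (c.toFun 0) z :=
        dist_triangle _ _ _
      have htri2 : dist (c.toFun s) z ≤ dist (c.toFun s) (c.toFun 1) + dist (c.toFun 1) z :=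
        dist_triangle _ _ _
    
      have e1 : dist (c.toFun s) (c.toFun 0) = dist (c.toFun 0) (c.toFun s) := dist_comm _ _
      have e2 : dist (c.toFun 0) z = dist p z := by rw [h0]
      have e3 : dist (c.toFun 1) z = dist q z := by rw [h1]
      have hR : r ≤ ∫ t in (0:ℝ)..1, c.speed t := by
        rw [← hsplit]; linarith
      calc Real.exp m * r ≤ Real.exp m * ∫ t in (0:ℝ)..1, c.speed t :=
            mul_le_mul_of_nonneg_left hR (Real.exp_nonneg _)
        _ ≤ wLength (fun p q => dist p q) w c := exp_le_wLength hw hm c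
  · have hpq : dist p q = 0 := no_curve_dist_eq_zero hlen hex
    rw [hpq, mul_zero]
    exact le_trans (min_le_left _ _) (confDist_nonneg (fun p q : X => dist p q) w p q)
end ConfAux
namespace ConfAux
variable {X : Type*} [MetricSpace X]

lemma squeeze {α : Type*} {l : Filter α} [l.NeBot] {u v : α → ℝ} {s L : ℝ} (hL : 0 < L)
    (hs : 0 ≤ s) (hu : Filter.Tendsto u l (𝓝 s))
    (hbound : ∀ ε : ℝ, 0 < ε →
      (∀ᶠ x in l, L * Real.exp (-ε) * u x ≤ v x ∧ v x ≤ L * Real.exp ε * u x)) :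
    Filter.Tendsto v l (𝓝 (L * s)) := by
  rw [Metric.tendsto_nhds]
  intro ε' hε'
  -- choose ε > 0 with |L * exp(±ε) * s - L * s| < ε'/2
  have hcont : ContinuousAt (fun e : ℝ => L * Real.exp e * s) 0 := by
    apply Continuous.continuousAt; continuity
  have hval : (fun e : ℝ => L * Real.exp e * s) 0 = L * s := by simp
  have h1 : ∀ᶠ e in 𝓝 (0:ℝ), |L * Real.exp e * s - L * s| < ε'/2 := by
    have := hcont.tendsto
    simp only [Real.exp_zero, mul_one, one_mul] at this
    have := Metric.tendsto_nhds.mp this (ε'/2) (by linarith)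
    simpa [Real.dist_eq] using this
  have h2 : ∀ᶠ e in 𝓝 (0:ℝ), |L * Real.exp (-e) * s - L * s| < ε'/2 := by
    have hcont2 : ContinuousAt (fun e : ℝ => L * Real.exp (-e) * s) 0 := by
      apply Continuous.continuousAt; continuity
    have hval2 : (fun e : ℝ => L * Real.exp (-e) * s) 0 = L * s := by simp
    have := hcont2.tendsto
    simp only [neg_zero, Real.exp_zero, mul_one, one_mul] at this
    have := Metric.tendsto_nhds.mp this (ε'/2) (by linarith)
    simpa [Real.dist_eq] using this
  obtain ⟨ε, hεpos, hεa, hεb⟩ : ∃ ε : ℝ, 0 < ε ∧ |L * Real.exp ε * s - L * s| < ε'/2 ∧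
      |L * Real.exp (-ε) * s - L * s| < ε'/2 := by
    have h3 : ∀ᶠ e in 𝓝[>] (0:ℝ), (0 < e ∧ (|L * Real.exp e * s - L * s| < ε'/2 ∧
        |L * Real.exp (-e) * s - L * s| < ε'/2)) := by
      filter_upwards [self_mem_nhdsWithin, nhdsWithin_le_nhds (h1.and h2)] with e he hab
      exact ⟨he, hab⟩
    obtain ⟨e, he1, he2, he3⟩ := h3.exists
    exact ⟨e, he1, he2, he3⟩
  -- now choose δ for u
  set δ := ε' / (2 * (L * Real.exp ε + 1)) with hδdef
  have hδpos : 0 < δ := by positivity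
  have hu' : ∀ᶠ x in l, |u x - s| < δ := by
    have := Metric.tendsto_nhds.mp hu δ hδpos
    simpa [Real.dist_eq] using this
  filter_upwards [hu', hbound ε hεpos] with x hux ⟨hlow, hhigh⟩
  rw [Real.dist_eq]
  have hEp : (0:ℝ) < L * Real.exp ε := by positivity
  have hEm : (0:ℝ) < L * Real.exp (-ε) := by positivity
  have hupper : v x - L * s < ε' := by
    have : v x ≤ L * Real.exp ε * (s + δ) := by
      calc v x ≤ L * Real.exp ε * u x := hhigh
        _ ≤ L * Real.exp ε * (s + δ) := by
            apply mul_le_mul_of_nonneg_left _ hEp.le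
            have := abs_lt.mp hux
            linarith
    have h9 : (L * Real.exp ε + 1) * δ = ε'/2 := by
      rw [hδdef]; field_simp
    have hd : L * Real.exp ε * δ < ε'/2 := by nlinarith [hEp, hδpos]
    have := abs_lt.mp hεa
    nlinarith [hEp]
  have hlower : L * s - v x < ε' := by
    have : L * Real.exp (-ε) * (s - δ) ≤ v x := by
      calc L * Real.exp (-ε) * (s - δ) ≤ L * Real.exp (-ε) * u x := by
            apply mul_le_mul_of_nonneg_left _ hEm.le
            have := abs_lt.mp hux
            linarith
        _ ≤ v x := hlow
    have hd : L * Real.exp (-ε) * δ < ε'/2 := by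
      have hee : Real.exp (-ε) ≤ Real.exp ε := Real.exp_le_exp.mpr (by linarith)
      have h5 : L * Real.exp (-ε) * δ ≤ L * Real.exp ε * δ :=
        mul_le_mul_of_nonneg_right (mul_le_mul_of_nonneg_left hee hL.le) hδpos.le
      have h9 : (L * Real.exp ε + 1) * δ = ε'/2 := by
        rw [hδdef]; field_simp
      have hd2 : L * Real.exp ε * δ < ε'/2 := by nlinarith [hEp, hδpos]
      linarith
    have := abs_lt.mp hεb
    nlinarith [hEm]
  rw [abs_lt]
  constructor <;> linarith

variable {w : X → ℝ} {m M : ℝ}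

lemma speed_transfer (hw : Continuous w) (hm : ∀ x, m ≤ w x)
    (hlen : ∀ a b : X, dist a b = lengthDist (fun p q => dist p q) a b)
    (f : ℝ → X) (t : ℝ) (s : ℝ) (hs : 0 ≤ s)
    (hu : Filter.Tendsto (fun h : ℝ => dist (f (t + h)) (f t) / |h|) (𝓝[≠] (0:ℝ)) (𝓝 s)) :
    Filter.Tendsto (fun h : ℝ => confDist (fun p q => dist p q) w (f (t + h)) (f t) / |h|)
      (𝓝[≠] (0:ℝ)) (𝓝 (Real.exp (w (f t)) * s)) := by
  set z := f t with hz
  have hdist0 : Filter.Tendsto (fun h : ℝ => dist (f (t + h)) z) (𝓝[≠] (0:ℝ)) (𝓝 0) := by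
    have habs : Filter.Tendsto (fun h : ℝ => |h|) (𝓝[≠] (0:ℝ)) (𝓝 0) := by
      have : Filter.Tendsto (fun h : ℝ => |h|) (𝓝 (0:ℝ)) (𝓝 |0|) :=
        continuous_abs.continuousAt
      simpa using this.mono_left nhdsWithin_le_nhds
    have hmul := habs.mul hu
    rw [zero_mul] at hmul
    apply hmul.congr'
    filter_upwards [self_mem_nhdsWithin] with h hh
    have : |h| ≠ 0 := abs_ne_zero.mpr hh
    field_simp
  apply squeeze (Real.exp_pos (w z)) hs hu
  intro ε hε
  obtain ⟨r, hr, hball⟩ : ∃ r > 0, ∀ x : X, dist x z < r → |w x - w z| < ε := by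
    have := Metric.continuous_iff.mp hw z ε hε
    obtain ⟨δ, hδ, hd⟩ := this
    exact ⟨δ, hδ, fun x hx => by simpa [Real.dist_eq] using hd x hx⟩
  have hballu : ∀ x : X, dist x z < r → w x ≤ w z + ε :=
    fun x hx => by have := abs_lt.mp (hball x hx); linarith
  have hballl : ∀ x : X, dist x z < r → w z - ε ≤ w x :=
    fun x hx => by have := abs_lt.mp (hball x hx); linarith
  set δ0 := min (r/4) (Real.exp m * r / Real.exp (w z - ε)) with hδ0def
  have hδ0pos : 0 < δ0 := lt_min (by positivity) (by positivity)
  have hev : ∀ᶠ h in 𝓝[≠] (0:ℝ), dist (f (t + h)) z < δ0 :=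
    hdist0.eventually (eventually_lt_nhds hδ0pos)
  filter_upwards [hev, self_mem_nhdsWithin] with h hdh hne
  have hh : (0:ℝ) < |h| := abs_pos.mpr hne
  have hp : dist (f (t + h)) z < r / 4 := lt_of_lt_of_le hdh (min_le_left _ _)
  have hqz : dist z z < r / 4 := by rw [dist_self]; positivity
  constructor
  · -- lower bound via loc_lower
    have hmin := loc_lower hw hm hlen hr hballl hp hqz
    have hbranch : Real.exp (w z - ε) * dist (f (t + h)) z < Real.exp m * r := by
      have h2 : dist (f (t + h)) z < Real.exp m * r / Real.exp (w z - ε) :=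
        lt_of_lt_of_le hdh (min_le_right _ _)
      rw [lt_div_iff₀ (Real.exp_pos _)] at h2
      linarith [mul_comm (dist (f (t + h)) z) (Real.exp (w z - ε))]
    rw [min_eq_left hbranch.le] at hmin
    calc Real.exp (w z) * Real.exp (-ε) * (dist (f (t + h)) (f t) / |h|)
        = Real.exp (w z - ε) * dist (f (t + h)) (f t) / |h| := by
          rw [← Real.exp_add, ← sub_eq_add_neg, mul_div_assoc]
      _ ≤ confDist (fun p q => dist p q) w (f (t + h)) (f t) / |h| := by
          gcongr
  · have hup := loc_upper hw hlen hr hballu hp hqz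
    calc confDist (fun p q => dist p q) w (f (t + h)) (f t) / |h|
        ≤ Real.exp (w z + ε) * dist (f (t + h)) (f t) / |h| := by
          gcongr
      _ = Real.exp (w z) * Real.exp ε * (dist (f (t + h)) (f t) / |h|) := by
          rw [Real.exp_add, mul_div_assoc]
end ConfAux
namespace ConfAux
variable {X : Type*} [MetricSpace X]
variable {w : X → ℝ} {m M : ℝ}

/-- Reparametrized restriction of a curve to `[a,b] ⊆ [0,1]`. -/
noncomputable def subCurve {d : X → X → ℝ} (c : ACWithSpeed X d) {a b : ℝ}
    (ha : 0 ≤ a) (hab : a < b) (hb : b ≤ 1) : ACWithSpeed X d where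
  toFun := fun s => c.toFun (a + s * (b - a))
  speed := fun s => (b - a) * c.speed (a + s * (b - a))
  speed_nonneg := fun s => mul_nonneg (by linarith) (c.speed_nonneg _)
  integrable := by
    have hk : (0:ℝ) < b - a := by linarith
    have h1 : IntervalIntegrable c.speed volume a b :=
      speed_sub_integrable c (by rw [Set.uIcc_of_le hab.le]; exact Set.Icc_subset_Icc ha hb)
    have h2 := h1.comp_add_left a
    rw [sub_self] at h2
    have h3 := h2.comp_mul_left (c := b - a)
    rw [zero_div, div_self hk.ne'] at h3
    have h4 := h3.const_mul (b - a)
    have heq : (fun s : ℝ => (b - a) * c.speed (a + s * (b - a)))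
        = fun x : ℝ => (b - a) * c.speed (a + (b - a) * x) := by
      funext s; rw [mul_comm s]
    rw [heq]
    exact h4
  speed_ae := by
    have hk : (0:ℝ) < b - a := by linarith
    have hae : volume {t : ℝ | ¬ (t ∈ Set.Ioo (0:ℝ) 1 →
        Filter.Tendsto (fun h : ℝ => d (c.toFun (t + h)) (c.toFun t) / |h|) (𝓝[≠] (0:ℝ))
          (𝓝 (c.speed t)))} = 0 := by
      have := c.speed_ae
      rw [ae_restrict_iff' measurableSet_Ioo] at this
      exact ae_iff.mp this
    set g : ℝ → ℝ := fun s => a + s * (b - a) with hg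
    have hpre : volume (g ⁻¹' {t : ℝ | ¬ (t ∈ Set.Ioo (0:ℝ) 1 →
        Filter.Tendsto (fun h : ℝ => d (c.toFun (t + h)) (c.toFun t) / |h|) (𝓝[≠] (0:ℝ))
          (𝓝 (c.speed t)))}) = 0 := by
      have heq : g ⁻¹' {t : ℝ | ¬ (t ∈ Set.Ioo (0:ℝ) 1 →
          Filter.Tendsto (fun h : ℝ => d (c.toFun (t + h)) (c.toFun t) / |h|) (𝓝[≠] (0:ℝ))
            (𝓝 (c.speed t)))} =
          (fun s : ℝ => s * (b - a)) ⁻¹' ((fun y : ℝ => a + y) ⁻¹' {t : ℝ |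
            ¬ (t ∈ Set.Ioo (0:ℝ) 1 →
            Filter.Tendsto (fun h : ℝ => d (c.toFun (t + h)) (c.toFun t) / |h|) (𝓝[≠] (0:ℝ))
              (𝓝 (c.speed t)))}) := rfl
      rw [heq, Real.volume_preimage_mul_right hk.ne']
      rw [measure_preimage_add volume a _, hae, mul_zero]
    have hN : ∀ᵐ s : ℝ ∂volume, g s ∉ {t : ℝ | ¬ (t ∈ Set.Ioo (0:ℝ) 1 →
        Filter.Tendsto (fun h : ℝ => d (c.toFun (t + h)) (c.toFun t) / |h|) (𝓝[≠] (0:ℝ))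
          (𝓝 (c.speed t)))} := by
      exact measure_eq_zero_iff_ae_notMem.mp hpre
    rw [ae_restrict_iff' measurableSet_Ioo]
    filter_upwards [hN] with s hNs hsIoo
    have hgs : g s ∈ Set.Ioo (0:ℝ) 1 := by
      constructor
      · have : 0 < s * (b - a) := mul_pos hsIoo.1 hk
        simp only [hg]; linarith
      · have : s * (b - a) < 1 * (b - a) := by
          apply mul_lt_mul_of_pos_right hsIoo.2 hk
        simp only [hg]; linarith
    have ht : Filter.Tendsto (fun h : ℝ => d (c.toFun (g s + h)) (c.toFun (g s)) / |h|)
        (𝓝[≠] (0:ℝ)) (𝓝 (c.speed (g s))) := by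
      simp only [Set.mem_setOf_eq, not_not] at hNs
      exact hNs hgs
    have hφ : Filter.Tendsto (fun h : ℝ => h * (b - a)) (𝓝[≠] (0:ℝ)) (𝓝[≠] (0:ℝ)) := by
      rw [tendsto_nhdsWithin_iff]
      constructor
      · have : Filter.Tendsto (fun h : ℝ => h * (b - a)) (𝓝 (0:ℝ)) (𝓝 (0 * (b - a))) :=
          (continuous_mul_right (b - a)).continuousAt
        rw [zero_mul] at this
        exact this.mono_left nhdsWithin_le_nhds
      · filter_upwards [self_mem_nhdsWithin] with h hh
        exact mul_ne_zero hh hk.ne'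
    have hcomp := ht.comp hφ
    have hgoal := hcomp.const_mul (b - a)
    have heq : ∀ h : ℝ, d (c.toFun (a + (s + h) * (b - a))) (c.toFun (a + s * (b - a))) / |h|
        = (b - a) * (d (c.toFun (g s + h * (b - a))) (c.toFun (g s)) / |h * (b - a)|) := by
      intro h
      have harg : a + (s + h) * (b - a) = g s + h * (b - a) := by simp only [hg]; ring
      have harg2 : a + s * (b - a) = g s := rfl
      rw [harg, harg2]
      rcases eq_or_ne h 0 with rfl | hne
      · simp
      · have hha : |h| ≠ 0 := abs_ne_zero.mpr hne
        rw [abs_mul, abs_of_pos hk]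
        field_simp
    exact Filter.Tendsto.congr (fun h => (heq h).symm) hgoal
  dist_le := by
    intro u v hu huv hv
    have hk : (0:ℝ) < b - a := by linarith
    have hcov : (∫ s in u..v, (b - a) * c.speed (a + s * (b - a)))
        = ∫ t in (a + u * (b - a))..(a + v * (b - a)), c.speed t := by
      calc (∫ s in u..v, (b - a) * c.speed (a + s * (b - a)))
          = (b - a) * ∫ s in u..v, c.speed ((b - a) * s + a) := by
            rw [intervalIntegral.integral_const_mul]
            congr 1
            simp only [show ∀ s : ℝ, a + s * (b - a) = (b - a) * s + a from fun s => by ring]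
        _ = (b - a) * ((b - a)⁻¹ • ∫ t in ((b - a) * u + a)..((b - a) * v + a), c.speed t) := by
            rw [intervalIntegral.integral_comp_mul_add c.speed hk.ne' a]
        _ = ∫ t in (a + u * (b - a))..(a + v * (b - a)), c.speed t := by
            rw [smul_eq_mul, ← mul_assoc, mul_inv_cancel₀ hk.ne', one_mul]
            congr 1 <;> ring
    rw [hcov]
    have hm1 : 0 ≤ u * (b - a) := mul_nonneg hu hk.le
    have hm2 : u * (b - a) ≤ v * (b - a) := mul_le_mul_of_nonneg_right huv hk.le
    have hm3 : v * (b - a) ≤ 1 * (b - a) := mul_le_mul_of_nonneg_right hv hk.le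
    exact c.dist_le _ _ (by linarith) (by linarith) (by linarith)

end ConfAux
namespace ConfAux
variable {X : Type*} [MetricSpace X]
variable {w : X → ℝ} {m M : ℝ}

lemma wLength_subCurve {d : X → X → ℝ} (c : ACWithSpeed X d) (ω : X → ℝ) {a b : ℝ}
    (ha : 0 ≤ a) (hab : a < b) (hb : b ≤ 1) :
    wLength d ω (subCurve c ha hab hb) = ∫ t in a..b, c.speed t * Real.exp (ω (c.toFun t)) := by
  have hk : (0:ℝ) < b - a := by linarith
  show (∫ s in (0:ℝ)..1, ((b - a) * c.speed (a + s * (b - a)))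
      * Real.exp (ω (c.toFun (a + s * (b - a))))) = _
  have harg : ∀ s : ℝ, a + s * (b - a) = (b - a) * s + a := fun s => by ring
  simp only [harg]
  have hmul : ∀ s : ℝ, (b - a) * c.speed ((b - a) * s + a)
      * Real.exp (ω (c.toFun ((b - a) * s + a)))
      = (b - a) * (c.speed ((b - a) * s + a) * Real.exp (ω (c.toFun ((b - a) * s + a)))) :=
    fun s => by ring
  simp only [hmul]
  rw [intervalIntegral.integral_const_mul,
    intervalIntegral.integral_comp_mul_add (fun t => c.speed t * Real.exp (ω (c.toFun t)))
      hk.ne' a]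
  rw [smul_eq_mul, ← mul_assoc, mul_inv_cancel₀ hk.ne', one_mul]
  congr 1 <;> ring

lemma confDist_le_integral (hw : Continuous w)
    (c : ACWithSpeed X (fun p q => dist p q)) {a b : ℝ}
    (ha : 0 ≤ a) (hab : a ≤ b) (hb : b ≤ 1) :
    confDist (fun p q => dist p q) w (c.toFun a) (c.toFun b)
      ≤ ∫ t in a..b, c.speed t * Real.exp (w (c.toFun t)) := by
  rcases eq_or_lt_of_le hab with rfl | hlt
  · rw [intervalIntegral.integral_same]
    exact le_of_eq (confDist_self w _ (dist_self _))
  · have h0 : (subCurve c ha hlt hb).toFun 0 = c.toFun a := by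
      show c.toFun (a + 0 * (b - a)) = c.toFun a
      norm_num
    have h1 : (subCurve c ha hlt hb).toFun 1 = c.toFun b := by
      show c.toFun (a + 1 * (b - a)) = c.toFun b
      norm_num
    calc confDist (fun p q => dist p q) w (c.toFun a) (c.toFun b)
        ≤ wLength (fun p q => dist p q) w (subCurve c ha hlt hb) :=
          confDist_le_wLength w _ h0 h1
      _ = _ := wLength_subCurve c w ha hlt hb

/-- The forward construction: a `d`-absolutely continuous curve is `d'`-absolutely continuous
with speed multiplied by the conformal factor. -/
noncomputable def conf (hw : Continuous w) (hm : ∀ x, m ≤ w x)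
    (hlen : ∀ a b : X, dist a b = lengthDist (fun p q => dist p q) a b)
    (c : ACWithSpeed X (fun p q => dist p q)) :
    ACWithSpeed X (confDist (fun p q => dist p q) w) where
  toFun := c.toFun
  speed := fun t => c.speed t * Real.exp (w (c.toFun t))
  speed_nonneg := fun t => mul_nonneg (c.speed_nonneg t) (Real.exp_nonneg _)
  integrable := integrable_mul_exp zero_le_one hd_dist c w hw uIcc01
  speed_ae := by
    filter_upwards [c.speed_ae] with t ht
    have h := speed_transfer hw hm hlen c.toFun t (c.speed t) (c.speed_nonneg t) ht
    rw [mul_comm (Real.exp _) (c.speed t)] at h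
    exact h
  dist_le := fun a b ha hab hb => confDist_le_integral hw c ha hab hb

end ConfAux
namespace ConfAux
variable {X : Type*} [MetricSpace X]
variable {w : X → ℝ} {m M : ℝ}

lemma unif_cont_near (hw : Continuous w) {K : Set X} (hK : IsCompact K) (hKne : K.Nonempty)
    {ε : ℝ} (hε : 0 < ε) :
    ∃ r > 0, ∀ z ∈ K, ∀ x : X, dist x z < r → |w x - w z| < ε := by
  have hhalf : ∀ z : X, ∃ ρ, 0 < ρ ∧ ∀ x : X, dist x z < ρ → |w x - w z| < ε/2 := by
    intro z
    obtain ⟨ρ, hρ, hd⟩ := Metric.continuous_iff.mp hw z (ε/2) (by linarith)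
    exact ⟨ρ, hρ, fun x hx => by simpa [Real.dist_eq] using hd x hx⟩
  choose ρ hρ hmod using hhalf
  obtain ⟨t, htK, htcov⟩ := hK.elim_nhds_subcover (fun z => Metric.ball z (ρ z / 2))
    (fun z _ => Metric.ball_mem_nhds z (by have := hρ z; positivity))
  by_cases htne : t.Nonempty
  · refine ⟨t.inf' htne (fun z => ρ z / 2), ?_, ?_⟩
    · exact (Finset.lt_inf'_iff htne).mpr fun z _ => by have := hρ z; positivity
    · intro z hzK x hx
      have hcov := htcov hzK
      simp only [Set.mem_iUnion] at hcov
      obtain ⟨z0, hz0t, hzball⟩ := hcov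
      rw [Metric.mem_ball] at hzball
      have hrle : t.inf' htne (fun z => ρ z / 2) ≤ ρ z0 / 2 := Finset.inf'_le _ hz0t
      have hxz0 : dist x z0 < ρ z0 := by
        have htr := dist_triangle x z z0
        have := lt_of_lt_of_le hx hrle
        linarith
      have h1 := hmod z0 x hxz0
      have h2 := hmod z0 z (lt_of_lt_of_le hzball (by linarith [hρ z0]))
      have hsplit : w x - w z = (w x - w z0) + (w z0 - w z) := by ring
      rw [hsplit]
      calc |(w x - w z0) + (w z0 - w z)| ≤ |w x - w z0| + |w z0 - w z| := abs_add_le _ _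
        _ < ε := by rw [abs_sub_comm (w z0) (w z)]; linarith
  · exfalso
    rcases hKne with ⟨x0, hx0⟩
    have hcov := htcov hx0
    simp only [Set.mem_iUnion] at hcov
    obtain ⟨z, hzt, -⟩ := hcov
    exact htne ⟨z, hzt⟩

lemma unif_lower (hw : Continuous w) (hm : ∀ x, m ≤ w x) (hM : ∀ x, w x ≤ M)
    (hlen : ∀ a b : X, dist a b = lengthDist (fun p q => dist p q) a b)
    {K : Set X} (hK : IsCompact K) (hKne : K.Nonempty) {ε : ℝ} (hε : 0 < ε) :
    ∃ δ > 0, (∀ z ∈ K, ∀ x : X, dist x z < δ → |w x - w z| < ε) ∧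
      (∀ z ∈ K, ∀ q : X, dist z q < δ →
        dist z q ≤ Real.exp (ε - w z) * confDist (fun p q => dist p q) w z q) := by
  obtain ⟨r, hr, hmod⟩ := unif_cont_near hw hK hKne hε
  refine ⟨min (r/4) (Real.exp (m - M) * (r/2)), lt_min (by positivity) (by positivity), ?_, ?_⟩
  · intro z hzK x hx
    exact hmod z hzK x (lt_of_lt_of_le hx ((min_le_left _ _).trans (by linarith)))
  · intro z hzK q hq
    have hq4 : dist q z < r/4 := by
      rw [dist_comm]
      exact lt_of_lt_of_le hq (min_le_left _ _)
    have hz4 : dist z z < r/4 := by rw [dist_self]; positivity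
    have hballl : ∀ x : X, dist x z < r → w z - ε ≤ w x := by
      intro x hx
      have := abs_lt.mp (hmod z hzK x hx)
      linarith
    have hmin := loc_lower hw hm hlen hr hballl hz4 hq4
    have hbranch : Real.exp (w z - ε) * dist z q < Real.exp m * r := by
      have h2 : dist z q < Real.exp (m - M) * (r/2) := lt_of_lt_of_le hq (min_le_right _ _)
      have h3 : Real.exp (w z - ε) ≤ Real.exp M :=
        Real.exp_le_exp.mpr (by have := hM z; linarith)
      have h4 : Real.exp (w z - ε) * dist z q ≤ Real.exp M * dist z q :=
        mul_le_mul_of_nonneg_right h3 dist_nonneg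
      have h5 : Real.exp M * dist z q < Real.exp M * (Real.exp (m - M) * (r/2)) :=
        mul_lt_mul_of_pos_left h2 (Real.exp_pos M)
      have h6 : Real.exp M * (Real.exp (m - M) * (r/2)) = Real.exp m * (r/2) := by
        rw [← mul_assoc, ← Real.exp_add]
        ring_nf
      have h7 : Real.exp m * (r/2) < Real.exp m * r := by
        have := Real.exp_pos m
        nlinarith
      linarith
    rw [min_eq_left hbranch.le] at hmin
    calc dist z q = Real.exp (ε - w z) * (Real.exp (w z - ε) * dist z q) := by
          rw [← mul_assoc, ← Real.exp_add, show ε - w z + (w z - ε) = 0 by ring,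
            Real.exp_zero, one_mul]
      _ ≤ _ := mul_le_mul_of_nonneg_left hmin (Real.exp_nonneg _)
end ConfAux
namespace ConfAux
variable {X : Type*} [MetricSpace X]
variable {w : X → ℝ} {m M : ℝ}

lemma star (hw : Continuous w) (hm : ∀ x, m ≤ w x) (hM : ∀ x, w x ≤ M)
    (hlen : ∀ a b : X, dist a b = lengthDist (fun p q => dist p q) a b)
    (c : ACWithSpeed X (confDist (fun p q => dist p q) w)) :
    dist (c.toFun 0) (c.toFun 1)
      ≤ ∫ t in (0:ℝ)..1, c.speed t * Real.exp (-w (c.toFun t)) := by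
  have hdd : ∀ p q : X, dist p q ≤ Real.exp (-m) * confDist (fun p q => dist p q) w p q :=
    dist_le_exp_confDist hw hm hlen
  have hcont : ContinuousOn c.toFun (Set.Icc 0 1) :=
    continuousOn_toFun (Real.exp_nonneg _) hdd c
  have hKcomp : IsCompact (c.toFun '' Set.Icc 0 1) :=
    isCompact_Icc.image_of_continuousOn hcont
  have hKne : (c.toFun '' Set.Icc 0 1).Nonempty :=
    ⟨c.toFun 0, ⟨0, by norm_num, rfl⟩⟩
  set I := ∫ t in (0:ℝ)..1, c.speed t * Real.exp (-w (c.toFun t)) with hI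
  have key : ∀ ε1 : ℝ, 0 < ε1 → dist (c.toFun 0) (c.toFun 1) ≤ Real.exp (2*ε1) * I := by
    intro ε1 hε1
    obtain ⟨δ, hδpos, hmod, hcomp⟩ := unif_lower hw hm hM hlen hKcomp hKne hε1
    obtain ⟨δ2, hδ2, hUC'⟩ := Metric.uniformContinuousOn_iff.mp
      (isCompact_Icc.uniformContinuousOn_of_continuous hcont) δ hδpos
    obtain ⟨n, hn⟩ := exists_nat_one_div_lt hδ2
    set N : ℕ := n + 1 with hN
    have hNpos : (0:ℝ) < N := by positivity
    set a : ℕ → ℝ := fun i => (i : ℝ) / N with ha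
    have ha0 : a 0 = 0 := by simp [ha]
    have haN : a N = 1 := by
      simp only [ha]
      rw [div_self hNpos.ne']
    have hstep : ∀ i : ℕ, a (i+1) - a i = 1 / N := by
      intro i
      simp only [ha]
      push_cast
      ring
    have hn' : 1 / (N:ℝ) < δ2 := by
      rw [hN]
      push_cast
      exact hn
    have hmono : ∀ i : ℕ, a i ≤ a (i+1) := by
      intro i
      have h1 := hstep i
      have h2 : (0:ℝ) < 1 / N := by positivity
      linarith
    have hmem : ∀ i : ℕ, i ≤ N → a i ∈ Set.Icc (0:ℝ) 1 := by
      intro i hi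
      constructor
      · simp only [ha]; positivity
      · simp only [ha]
        rw [div_le_one hNpos]
        exact_mod_cast hi
    have hsmall : ∀ i : ℕ, dist (a i) (a (i+1)) < δ2 := by
      intro i
      rw [Real.dist_eq, abs_sub_comm, hstep i, abs_of_pos (by positivity)]
      exact hn'
    -- the integrand is interval integrable on each piece
    have hintF : ∀ u v : ℝ, Set.uIcc u v ⊆ Set.Icc (0:ℝ) 1 →
        IntervalIntegrable (fun t => c.speed t * Real.exp (-w (c.toFun t))) volume u v := by
      intro u v huv
      have := integrable_mul_exp (Real.exp_nonneg (-m)) hdd c (fun x => -w x) hw.neg huv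
      exact this
    have hterm : ∀ i : ℕ, i < N →
        dist (c.toFun (a i)) (c.toFun (a (i+1)))
          ≤ Real.exp (2*ε1) * ∫ t in a i..a (i+1), c.speed t * Real.exp (-w (c.toFun t)) := by
      intro i hi
      have hiN : i ≤ N := hi.le
      have hi1N : i + 1 ≤ N := hi
      have hai := hmem i hiN
      have hai1 := hmem (i+1) hi1N
      have hsub : Set.uIcc (a i) (a (i+1)) ⊆ Set.Icc (0:ℝ) 1 := by
        rw [Set.uIcc_of_le (hmono i)]
        exact Set.Icc_subset_Icc hai.1 hai1.2
      have hz : c.toFun (a i) ∈ c.toFun '' Set.Icc 0 1 := ⟨a i, hai, rfl⟩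
      have hdsmall : dist (c.toFun (a i)) (c.toFun (a (i+1))) < δ :=
        hUC' _ hai _ hai1 (hsmall i)
      have h1 := hcomp _ hz _ hdsmall
      have h2 : confDist (fun p q => dist p q) w (c.toFun (a i)) (c.toFun (a (i+1)))
          ≤ ∫ t in a i..a (i+1), c.speed t :=
        c.dist_le _ _ hai.1 (hmono i) hai1.2
      have h3 : Real.exp (ε1 - w (c.toFun (a i))) * ∫ t in a i..a (i+1), c.speed t
          ≤ Real.exp (2*ε1) * ∫ t in a i..a (i+1), c.speed t * Real.exp (-w (c.toFun t)) := by
        rw [← intervalIntegral.integral_const_mul, ← intervalIntegral.integral_const_mul]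
        apply intervalIntegral.integral_mono_on (hmono i)
          ((speed_sub_integrable c hsub).const_mul _) ((hintF _ _ hsub).const_mul _)
        intro t ht
        have htIcc : t ∈ Set.Icc (0:ℝ) 1 := ⟨hai.1.trans ht.1, ht.2.trans hai1.2⟩
        have htdist : dist (a i) t < δ2 := by
          rw [Real.dist_eq, abs_sub_comm, abs_of_nonneg (by linarith [ht.1])]
          have := hstep i
          have h4 : t - a i ≤ 1 / N := by linarith [ht.2]
          linarith
        have hct : dist (c.toFun t) (c.toFun (a i)) < δ := by
          rw [dist_comm]
          exact hUC' _ hai _ htIcc htdist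
        have hwt := abs_lt.mp (hmod _ hz _ hct)
        have hexp : Real.exp (ε1 - w (c.toFun (a i)))
            ≤ Real.exp (2*ε1) * Real.exp (-w (c.toFun t)) := by
          rw [← Real.exp_add]
          apply Real.exp_le_exp.mpr
          linarith
        calc Real.exp (ε1 - w (c.toFun (a i))) * c.speed t
            ≤ (Real.exp (2*ε1) * Real.exp (-w (c.toFun t))) * c.speed t :=
              mul_le_mul_of_nonneg_right hexp (c.speed_nonneg t)
          _ = Real.exp (2*ε1) * (c.speed t * Real.exp (-w (c.toFun t))) := by ring
      calc dist (c.toFun (a i)) (c.toFun (a (i+1)))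
          ≤ Real.exp (ε1 - w (c.toFun (a i)))
              * confDist (fun p q => dist p q) w (c.toFun (a i)) (c.toFun (a (i+1))) := h1
        _ ≤ Real.exp (ε1 - w (c.toFun (a i))) * ∫ t in a i..a (i+1), c.speed t :=
            mul_le_mul_of_nonneg_left h2 (Real.exp_nonneg _)
        _ ≤ _ := h3
    have hsum := dist_le_range_sum_dist (fun i => c.toFun (a i)) N
    rw [ha0, haN] at hsum
    have hsum2 : (∑ i ∈ Finset.range N, dist (c.toFun (a i)) (c.toFun (a (i+1))))
        ≤ ∑ i ∈ Finset.range N,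
            Real.exp (2*ε1) * ∫ t in a i..a (i+1), c.speed t * Real.exp (-w (c.toFun t)) := by
      apply Finset.sum_le_sum
      intro i hi
      exact hterm i (Finset.mem_range.mp hi)
    have hadj : (∑ i ∈ Finset.range N,
        ∫ t in a i..a (i+1), c.speed t * Real.exp (-w (c.toFun t)))
        = ∫ t in (a 0)..(a N), c.speed t * Real.exp (-w (c.toFun t)) := by
      apply intervalIntegral.sum_integral_adjacent_intervals
      intro k hk
      apply hintF
      rw [Set.uIcc_of_le (hmono k)]
      exact Set.Icc_subset_Icc (hmem k hk.le).1 (hmem (k+1) hk).2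
    rw [← Finset.mul_sum, hadj, ha0, haN] at hsum2
    exact hsum.trans hsum2
  have hInn : 0 ≤ I :=
    intervalIntegral.integral_nonneg zero_le_one
      (fun t _ => mul_nonneg (c.speed_nonneg t) (Real.exp_nonneg _))
  have hlim : Filter.Tendsto (fun e : ℝ => Real.exp (2*e) * I) (𝓝[>] (0:ℝ)) (𝓝 I) := by
    have hc : ContinuousAt (fun e : ℝ => Real.exp (2*e) * I) 0 :=
      ((Real.continuous_exp.comp (continuous_const.mul continuous_id)).mul
        continuous_const).continuousAt
    have := hc.tendsto
    simp only [mul_zero, Real.exp_zero, one_mul] at this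
    exact this.mono_left nhdsWithin_le_nhds
  exact ge_of_tendsto hlim (by
    filter_upwards [self_mem_nhdsWithin] with e he
    exact key e he)

end ConfAux
namespace ConfAux
variable {X : Type*} [MetricSpace X]
variable {w : X → ℝ} {m M : ℝ}

lemma wLength_conf_eq (hw : Continuous w) (hm : ∀ x, m ≤ w x)
    (hlen : ∀ a b : X, dist a b = lengthDist (fun p q => dist p q) a b)
    (c : ACWithSpeed X (fun p q => dist p q)) :
    wLength (confDist (fun p q => dist p q) w) (fun p => -w p) (conf hw hm hlen c)
      = wLength (fun p q => dist p q) (fun _ => 0) c := by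
  unfold wLength
  apply intervalIntegral.integral_congr
  intro t _
  show (c.speed t * Real.exp (w (c.toFun t))) * Real.exp (-w (c.toFun t))
      = c.speed t * Real.exp 0
  rw [Real.exp_zero, mul_one, mul_assoc, ← Real.exp_add]
  simp

end ConfAux



open ConfAux

theorem stmt5 {X : Type*} [MetricSpace X]
    (hlen : ∀ a b : X, dist a b = lengthDist (fun p q => dist p q) a b)
    (w : X → ℝ) (hw : Continuous w) (hb : ∃ m M : ℝ, ∀ x, m ≤ w x ∧ w x ≤ M) :
    ∀ x y : X,
      confDist (confDist (fun p q => dist p q) w) (fun p => -w p) x y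
        = lengthDist (fun p q => dist p q) x y := by
  obtain ⟨m, M, hmM⟩ := hb
  have hm : ∀ x, m ≤ w x := fun x => (hmM x).1
  have hM : ∀ x, w x ≤ M := fun x => (hmM x).2
  intro x y
  rw [← hlen x y]
  apply le_antisymm
  · by_cases hex : ∃ c : ACWithSpeed X (fun p q => dist p q), c.toFun 0 = x ∧ c.toFun 1 = y
    · obtain ⟨c₀, h₀⟩ := hex
      have hball : ∀ L ∈ {L | ∃ c : ACWithSpeed X (fun p q => dist p q),
          c.toFun 0 = x ∧ c.toFun 1 = y ∧ L = wLength (fun p q => dist p q) (fun _ => 0) c},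
          confDist (confDist (fun p q => dist p q) w) (fun p => -w p) x y ≤ L := by
        rintro L ⟨c, hc0, hc1, rfl⟩
        have hle := confDist_le_wLength (d := confDist (fun p q => dist p q) w)
          (fun p => -w p) (conf hw hm hlen c) (x := x) (y := y) hc0 hc1
        exact hle.trans (le_of_eq (wLength_conf_eq hw hm hlen c))
      have hdist : dist x y = sInf {L | ∃ c : ACWithSpeed X (fun p q => dist p q),
          c.toFun 0 = x ∧ c.toFun 1 = y ∧ L = wLength (fun p q => dist p q) (fun _ => 0) c} := by
        rw [hlen x y]; rfl
      rw [hdist]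
      exact le_csInf ⟨_, c₀, h₀.1, h₀.2, rfl⟩ hball
    · have hxy : dist x y = 0 := no_curve_dist_eq_zero hlen hex
      have hxyeq : x = y := dist_eq_zero.mp hxy
      subst hxyeq
      rw [hxy]
      exact le_of_eq (confDist_self (fun p => -w p) x (confDist_self w x (dist_self x)))
  · by_cases hex' : ∃ c' : ACWithSpeed X (confDist (fun p q => dist p q) w),
        c'.toFun 0 = x ∧ c'.toFun 1 = y
    · obtain ⟨c₀', h₀'⟩ := hex'
      refine le_csInf ⟨wLength (confDist (fun p q => dist p q) w) (fun p => -w p) c₀',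
        c₀', h₀'.1, h₀'.2, rfl⟩ ?_
      rintro L ⟨c', hc0, hc1, rfl⟩
      have hstar := star hw hm hM hlen c'
      rw [hc0, hc1] at hstar
      exact hstar
    · have hnod : ¬ ∃ c : ACWithSpeed X (fun p q => dist p q),
          c.toFun 0 = x ∧ c.toFun 1 = y := by
        rintro ⟨c, hc0, hc1⟩
        exact hex' ⟨conf hw hm hlen c, hc0, hc1⟩
      rw [no_curve_dist_eq_zero hlen hnod]
      exact confDist_nonneg _ _ _ _
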